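/- Let n, r ≥ 1 and 0 ≤ j ≤ r be integers. Then ω_{n,r}(j) = (1/(r!·n^r)) · Σ_{i=j}^{r} C(i,j) · C(r,i) · D_{r−i,0} · (n−1)^{i−j} · n^{r−i}, where C(·,·) denotes binomial coefficients and D_{m,0} is the number of derangements of an m-element set (with D_{0,0} = 1). -/

import Mathlib

/-- The action of an element of the wreath product `C_n ≀ S_r` on `B(n,r)`. -/
def wAct (n r : ℕ) (σ : (Fin r → ZMod n) × Equiv.Perm (Fin r)) :
    ZMod n × Fin r → ZMod n × Fin r :=
  fun p => (σ.1 p.2 + p.1, σ.2 p.2)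

/-- The number of fixed points of `σ ∈ C_n ≀ S_r` acting on `B(n,r)`. -/
noncomputable def fixCount (n r : ℕ) (σ : (Fin r → ZMod n) × Equiv.Perm (Fin r)) : ℕ :=
  Nat.card {p : ZMod n × Fin r // wAct n r σ p = p}

/-- `ω_{n,r}(j)`. -/
noncomputable def omega (n r j : ℕ) : ℝ :=
  (Nat.card {σ : (Fin r → ZMod n) × Equiv.Perm (Fin r) // fixCount n r σ = j * n} : ℝ)
    / ((r.factorial * n ^ r : ℕ) : ℝ)

/-- The rencontres number `D_{r,i}`: the number of permutations of an
`r`-element set with exactly `i` fixed points (so `D_{m,0}` counts derangements). -/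
noncomputable def rencontres (r i : ℕ) : ℕ :=
  Nat.card {π : Equiv.Perm (Fin r) // Nat.card {x : Fin r // π x = x} = i}

open Finset

lemma my_rencontres_zero (m : ℕ) : rencontres m 0 = numDerangements m := by
  classical
  rw [rencontres, ← card_derangements_fin_eq_numDerangements, ← Nat.card_eq_fintype_card]
  apply Nat.card_congr
  apply Equiv.subtypeEquivRight
  intro π
  simp [Nat.card_eq_fintype_card, Fintype.card_eq_zero_iff, isEmpty_subtype,
    derangements, Function.IsFixedPt]

lemma my_perm_fiber (r : ℕ) (A : Finset (Fin r)) :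
    (univ.filter fun π : Equiv.Perm (Fin r) => (univ.filter fun x => π x = x) = A).card
      = numDerangements (r - A.card) := by
  classical
  rw [← Fintype.card_subtype, ← Nat.card_eq_fintype_card]
  have e : {π : Equiv.Perm (Fin r) // (univ.filter fun x => π x = x) = A}
      ≃ derangements {x : Fin r // x ∉ A} := by
    refine Equiv.trans (Equiv.subtypeEquivRight ?_)
      (derangements.subtypeEquiv (fun x : Fin r => x ∉ A)).symm
    intro π
    simp only [Finset.ext_iff, mem_filter, mem_univ, true_and, not_not,
      Function.mem_fixedPoints, Function.IsFixedPt]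
    exact ⟨fun h a => (h a).symm, fun h a => (h a).symm⟩
  rw [Nat.card_congr e, Nat.card_eq_fintype_card, card_derangements_eq_numDerangements]
  congr 1
  rw [Fintype.card_subtype_compl, Fintype.card_fin]
  congr 1
  simp [Fintype.card_subtype]

lemma my_fun_fiber (n r : ℕ) [NeZero n] (A s : Finset (Fin r)) (hs : s ⊆ A) :
    (univ.filter fun f : Fin r → ZMod n =>
        (univ.filter fun x => x ∈ A ∧ f x = 0) = s).card
      = (n - 1) ^ (A.card - s.card) * n ^ (r - A.card) := by
  classical
  rw [← Fintype.card_subtype]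
  have e1 : {f : Fin r → ZMod n // (univ.filter fun x => x ∈ A ∧ f x = 0) = s}
      ≃ ∀ x : Fin r, {z : ZMod n // (x ∈ A ∧ z = 0) ↔ x ∈ s} := by
    refine (Equiv.subtypeEquivRight ?_).trans Equiv.subtypePiEquivPi
    intro f
    simp [Finset.ext_iff]
  rw [Fintype.card_congr e1, Fintype.card_pi]
  rw [← Finset.prod_mul_prod_compl A, ← Finset.prod_sdiff hs]
  have h1 : ∀ x ∈ s, Fintype.card {z : ZMod n // (x ∈ A ∧ z = 0) ↔ x ∈ s} = 1 := by
    intro x hx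
    rw [Fintype.card_congr (Equiv.subtypeEquivRight (q := fun z : ZMod n => z = 0)
      (by intro z; simp [hx, hs hx]))]
    exact Fintype.card_subtype_eq (0 : ZMod n)
  have h2 : ∀ x ∈ A \ s, Fintype.card {z : ZMod n // (x ∈ A ∧ z = 0) ↔ x ∈ s} = n - 1 := by
    intro x hx
    rw [mem_sdiff] at hx
    rw [Fintype.card_congr (Equiv.subtypeEquivRight (q := fun z : ZMod n => ¬ z = 0)
      (by intro z; simp [hx.1, hx.2]))]
    rw [Fintype.card_subtype_compl, ZMod.card, Fintype.card_subtype_eq]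
  have h3 : ∀ x ∈ Aᶜ, Fintype.card {z : ZMod n // (x ∈ A ∧ z = 0) ↔ x ∈ s} = n := by
    intro x hx
    rw [mem_compl] at hx
    rw [Fintype.card_congr (Equiv.subtypeUnivEquiv
      (by intro z; have hxs : x ∉ s := fun h => hx (hs h); simp [hx, hxs]))]
    exact ZMod.card n
  rw [Finset.prod_congr rfl h1, Finset.prod_congr rfl h2, Finset.prod_congr rfl h3]
  rw [Finset.prod_const_one, Finset.prod_const, Finset.prod_const, mul_one,
    card_sdiff_of_subset hs, card_compl, Fintype.card_fin]

lemma my_pairs (r j i : ℕ) :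
    ((univ.filter fun As : Finset (Fin r) × Finset (Fin r) =>
        As.2 ⊆ As.1 ∧ As.2.card = j).filter fun b => b.1.card = i).card
      = r.choose i * i.choose j := by
  classical
  rw [Finset.card_eq_sum_card_fiberwise (f := Prod.fst) (t := univ.powersetCard i)
    (fun b hb => by
      simp only [mem_coe, mem_filter] at hb
      exact mem_powersetCard_univ.mpr hb.2)]
  have hfib : ∀ A ∈ univ.powersetCard i,
      (((univ.filter fun As : Finset (Fin r) × Finset (Fin r) =>
        As.2 ⊆ As.1 ∧ As.2.card = j).filter fun b => b.1.card = i).filter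
          fun b => b.1 = A).card = i.choose j := by
    intro A hA
    have hAcard : A.card = i := mem_powersetCard_univ.mp hA
    have : (((univ.filter fun As : Finset (Fin r) × Finset (Fin r) =>
        As.2 ⊆ As.1 ∧ As.2.card = j).filter fun b => b.1.card = i).filter
          fun b => b.1 = A) = {A} ×ˢ A.powersetCard j := by
      ext b
      simp only [mem_filter, mem_univ, true_and, mem_product, mem_singleton, mem_powersetCard]
      constructor
      · rintro ⟨⟨⟨h1, h2⟩, _⟩, h4⟩
        exact ⟨h4, by rw [← h4]; exact h1, h2⟩
      · rintro ⟨h4, h1, h2⟩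
        subst h4
        exact ⟨⟨⟨h1, h2⟩, hAcard⟩, rfl⟩
    rw [this, Finset.card_product, Finset.card_singleton, one_mul, card_powersetCard, hAcard]
  rw [Finset.sum_congr rfl hfib, Finset.sum_const, Finset.card_powersetCard, card_univ,
    Fintype.card_fin, smul_eq_mul]

lemma my_fixCount_eq (n r : ℕ) (σ : (Fin r → ZMod n) × Equiv.Perm (Fin r)) :
    fixCount n r σ = n * Nat.card {x : Fin r // σ.2 x = x ∧ σ.1 x = 0} := by
  classical
  have e : {p : ZMod n × Fin r // wAct n r σ p = p}
      ≃ ZMod n × {x : Fin r // σ.2 x = x ∧ σ.1 x = 0} :=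
  { toFun := fun p => (p.1.1, ⟨p.1.2, by
      obtain ⟨⟨z, x⟩, hp⟩ := p
      simp only [wAct, Prod.mk.injEq] at hp
      refine ⟨hp.2, ?_⟩
      have := hp.1
      rwa [add_eq_right] at this⟩)
    invFun := fun zx => ⟨(zx.1, zx.2.1), by
      simp [wAct, Prod.ext_iff, zx.2.2.1, zx.2.2.2]⟩
    left_inv := fun p => rfl
    right_inv := fun zx => rfl }
  rw [fixCount, Nat.card_congr e, Nat.card_prod, Nat.card_zmod]

lemma my_key (n r j : ℕ) (hn : 1 ≤ n) :
    Nat.card {σ : (Fin r → ZMod n) × Equiv.Perm (Fin r) // fixCount n r σ = j * n}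
      = ∑ i ∈ Finset.Icc j r,
          (r.choose i * i.choose j) *
            (numDerangements (r - i) * ((n - 1) ^ (i - j) * n ^ (r - i))) := by
  classical
  haveI : NeZero n := ⟨by omega⟩
  -- condition rewrite
  have hcond : ∀ σ : (Fin r → ZMod n) × Equiv.Perm (Fin r),
      fixCount n r σ = j * n ↔
        (univ.filter fun x => σ.2 x = x ∧ σ.1 x = 0).card = j := by
    intro σ
    rw [my_fixCount_eq, Nat.card_eq_fintype_card, Fintype.card_subtype]
    constructor
    · intro h
      have h' : n * (univ.filter fun x => σ.2 x = x ∧ σ.1 x = 0).card = n * j := by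
        rw [h, mul_comm]
      exact Nat.eq_of_mul_eq_mul_left (by omega) h'
    · intro h
      rw [h, mul_comm]
  have hN : Nat.card {σ : (Fin r → ZMod n) × Equiv.Perm (Fin r) // fixCount n r σ = j * n}
      = (univ.filter fun σ : (Fin r → ZMod n) × Equiv.Perm (Fin r) =>
          (univ.filter fun x => σ.2 x = x ∧ σ.1 x = 0).card = j).card := by
    rw [Nat.card_congr (Equiv.subtypeEquivRight hcond), Nat.card_eq_fintype_card,
      Fintype.card_subtype]
  rw [hN]
  set t : Finset (Finset (Fin r) × Finset (Fin r)) :=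
    univ.filter (fun As => As.2 ⊆ As.1 ∧ As.2.card = j) with ht
  set g : (Fin r → ZMod n) × Equiv.Perm (Fin r) → Finset (Fin r) × Finset (Fin r) :=
    fun σ => (univ.filter fun x => σ.2 x = x,
              univ.filter fun x => σ.2 x = x ∧ σ.1 x = 0) with hg
  have hmaps : ∀ σ ∈ (univ.filter fun σ : (Fin r → ZMod n) × Equiv.Perm (Fin r) =>
      (univ.filter fun x => σ.2 x = x ∧ σ.1 x = 0).card = j), g σ ∈ t := by
    intro σ hσ
    simp only [mem_filter, mem_univ, true_and] at hσ
    rw [ht, mem_filter]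
    refine ⟨mem_univ _, ?_, hσ⟩
    intro x hx
    simp only [hg, mem_filter, mem_univ, true_and] at hx ⊢
    exact hx.1
  rw [Finset.card_eq_sum_card_fiberwise hmaps]
  have hfiber : ∀ b ∈ t,
      (((univ.filter fun σ : (Fin r → ZMod n) × Equiv.Perm (Fin r) =>
          (univ.filter fun x => σ.2 x = x ∧ σ.1 x = 0).card = j)).filter
        fun σ => g σ = b).card
      = numDerangements (r - b.1.card) * ((n - 1) ^ (b.1.card - j) * n ^ (r - b.1.card)) := by
    intro b hb
    obtain ⟨A, s⟩ := b
    simp only [ht, mem_filter, mem_univ, true_and] at hb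
    obtain ⟨hsA, hsj⟩ := hb
    rw [filter_filter]
    have hmain : ∀ σ : (Fin r → ZMod n) × Equiv.Perm (Fin r),
        (univ.filter fun x => σ.2 x = x) = A →
        (univ.filter fun x => σ.2 x = x ∧ σ.1 x = 0)
          = univ.filter fun x => x ∈ A ∧ σ.1 x = 0 := by
      intro σ h2
      ext x
      simp only [mem_filter, mem_univ, true_and]
      rw [← h2]
      simp
    have hpred : (univ.filter fun σ : (Fin r → ZMod n) × Equiv.Perm (Fin r) =>
          ((univ.filter fun x => σ.2 x = x ∧ σ.1 x = 0).card = j) ∧ g σ = (A, s))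
        = univ.filter fun σ : (Fin r → ZMod n) × Equiv.Perm (Fin r) =>
            (univ.filter fun x => x ∈ A ∧ σ.1 x = 0) = s
              ∧ (univ.filter fun x => σ.2 x = x) = A := by
      apply filter_congr
      intro σ _
      simp only [hg, Prod.mk.injEq]
      constructor
      · rintro ⟨hQ, h2, h1⟩
        exact ⟨by rw [← hmain σ h2]; exact h1, h2⟩
      · rintro ⟨h1, h2⟩
        have h1' : (univ.filter fun x => σ.2 x = x ∧ σ.1 x = 0) = s := by
          rw [hmain σ h2]; exact h1
        exact ⟨by rw [h1', hsj], h2, h1'⟩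
    rw [hpred, ← Finset.univ_product_univ]
    have hsplit : ((univ ×ˢ univ).filter fun σ : (Fin r → ZMod n) × Equiv.Perm (Fin r) =>
          (univ.filter fun x => x ∈ A ∧ σ.1 x = 0) = s
            ∧ (univ.filter fun x => σ.2 x = x) = A)
        = (univ.filter fun f : Fin r → ZMod n =>
              (univ.filter fun x => x ∈ A ∧ f x = 0) = s)
            ×ˢ (univ.filter fun π : Equiv.Perm (Fin r) =>
              (univ.filter fun x => π x = x) = A) := by
      ext σ
      simp only [mem_filter, mem_product, mem_univ, true_and]
    rw [hsplit, Finset.card_product, my_fun_fiber n r A s hsA, my_perm_fiber r A, hsj]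
    dsimp only
    ring
  rw [Finset.sum_congr rfl hfiber]
  -- group by the size of the first component
  have hmaps2 : ∀ b ∈ t, b.1.card ∈ Finset.Icc j r := by
    intro b hb
    simp only [ht, mem_filter, mem_univ, true_and] at hb
    rw [Finset.mem_Icc]
    constructor
    · rw [← hb.2]; exact Finset.card_le_card hb.1
    · calc b.1.card ≤ (univ : Finset (Fin r)).card := Finset.card_le_univ _
        _ = r := by rw [card_univ, Fintype.card_fin]
  rw [← Finset.sum_fiberwise_of_maps_to hmaps2
    (fun b => numDerangements (r - b.1.card) * ((n - 1) ^ (b.1.card - j) * n ^ (r - b.1.card)))]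
  refine Finset.sum_congr rfl fun i _ => ?_
  have : ∀ b ∈ t.filter (fun b => b.1.card = i),
      numDerangements (r - b.1.card) * ((n - 1) ^ (b.1.card - j) * n ^ (r - b.1.card))
        = numDerangements (r - i) * ((n - 1) ^ (i - j) * n ^ (r - i)) := by
    intro b hb
    rw [(mem_filter.mp hb).2]
  rw [Finset.sum_congr rfl this, Finset.sum_const, smul_eq_mul, ht, my_pairs]

theorem stmt17 (n r j : ℕ) (hn : 1 ≤ n) (hr : 1 ≤ r) (hj : j ≤ r) :
    omega n r j
      = (1 / ((r.factorial * n ^ r : ℕ) : ℝ)) *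
          ∑ i ∈ Finset.Icc j r,
            (Nat.choose i j : ℝ) * (Nat.choose r i : ℝ) * (rencontres (r - i) 0 : ℝ) *
              ((n : ℝ) - 1) ^ (i - j) * (n : ℝ) ^ (r - i) := by
  rw [omega, my_key n r j hn, Nat.cast_sum, Finset.sum_div, one_div, Finset.mul_sum]
  refine Finset.sum_congr rfl fun i _ => ?_
  rw [my_rencontres_zero]
  have hcast : ((n - 1 : ℕ) : ℝ) = (n : ℝ) - 1 := by
    push_cast [Nat.cast_sub hn]
    ring
  push_cast [hcast]
  ring
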